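/- For every real y > 0, (1+y)·ln(1+y) − y ≥ (5y/8)·ln(5y/4). -/

import Mathlib

open Real

set_option maxHeartbeats 1000000


/-- Tight rational lower bound on `log (21/20)`. -/
lemma lnr : (0.048785:ℝ) ≤ Real.log (21/20) := by
  have h := Real.abs_log_sub_add_sum_range_le (x := -(1/20)) (by rw [abs_of_nonpos] <;> norm_num) 3
  rw [abs_le] at h
  have he : (1:ℝ) - -(1/20) = 21/20 := by norm_num
  rw [he] at h
  simp [Finset.sum_range_succ] at h
  obtain ⟨h1, _⟩ := h
  norm_num at h1 ⊢
  linarith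

lemma log_lb {p q w : ℝ} (hp : 0 < p) (h1 : p ≤ w) (h2 : w ≤ q) :
    Real.log p + (w - p)/q ≤ Real.log w := by
  have hw : 0 < w := lt_of_lt_of_le hp h1
  have h3 := Real.log_le_sub_one_of_pos (show 0 < p/w by positivity)
  rw [Real.log_div hp.ne' hw.ne'] at h3
  have h4 : (w - p)/q ≤ (w - p)/w := div_le_div_of_nonneg_left (by linarith) hw h2
  have h5 : (w - p)/w = 1 - p/w := by field_simp
  linarith

lemma step (k : ℕ) (w q : ℝ) (h1 : ((21/20:ℝ))^k ≤ w) (h2 : w ≤ q) :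
    (k:ℝ)*0.048785 + (w - (21/20)^k)/q ≤ Real.log w := by
  have hp : (0:ℝ) < (21/20)^k := by positivity
  have h := log_lb hp h1 h2
  have hlp : Real.log ((21/20:ℝ)^k) = (k:ℝ) * Real.log (21/20) := by
    rw [Real.log_pow]
  have hk : (0:ℝ) ≤ (k:ℝ) := Nat.cast_nonneg k
  nlinarith [mul_le_mul_of_nonneg_left lnr hk]

lemma tan8 (m w : ℝ) (hm : 0 ≤ m) (hw : 0 ≤ w) :
    m^8 + 8*m^7*(w-m) ≤ w^8 := by
  nlinarith [sq_nonneg (w-m), mul_nonneg (sq_nonneg (w-m)) (mul_nonneg (pow_nonneg hm 0) (pow_nonneg hw 6)),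
    mul_nonneg (sq_nonneg (w-m)) (mul_nonneg (pow_nonneg hm 1) (pow_nonneg hw 5)),
    mul_nonneg (sq_nonneg (w-m)) (mul_nonneg (pow_nonneg hm 2) (pow_nonneg hw 4)),
    mul_nonneg (sq_nonneg (w-m)) (mul_nonneg (pow_nonneg hm 3) (pow_nonneg hw 3)),
    mul_nonneg (sq_nonneg (w-m)) (mul_nonneg (pow_nonneg hm 4) (pow_nonneg hw 2)),
    mul_nonneg (sq_nonneg (w-m)) (mul_nonneg (pow_nonneg hm 5) (pow_nonneg hw 1)),
    mul_nonneg (sq_nonneg (w-m)) (mul_nonneg (pow_nonneg hm 6) (pow_nonneg hw 0))]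

lemma chord5 (a b w : ℝ) (ha : 0 ≤ a) (h1 : a ≤ w) (h2 : w ≤ b) :
    (b-a)*w^5 ≤ (b-a)*a^5 + (b^5-a^5)*(w-a) := by
  have hw : 0 ≤ w := le_trans ha h1
  have hb : 0 ≤ b := le_trans hw h2
  have key : 0 ≤ (w-a)*(b-w)*(b-a) := by
    apply mul_nonneg (mul_nonneg _ _) _ <;> linarith
  nlinarith [key, mul_nonneg key (mul_nonneg (mul_nonneg (pow_nonneg ha 0) (pow_nonneg hb 3)) (pow_nonneg hw 0)),
    mul_nonneg key (mul_nonneg (mul_nonneg (pow_nonneg ha 0) (pow_nonneg hb 2)) (pow_nonneg hw 1)),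
    mul_nonneg key (mul_nonneg (mul_nonneg (pow_nonneg ha 0) (pow_nonneg hb 1)) (pow_nonneg hw 2)),
    mul_nonneg key (mul_nonneg (mul_nonneg (pow_nonneg ha 0) (pow_nonneg hb 0)) (pow_nonneg hw 3)),
    mul_nonneg key (mul_nonneg (mul_nonneg (pow_nonneg ha 1) (pow_nonneg hb 2)) (pow_nonneg hw 0)),
    mul_nonneg key (mul_nonneg (mul_nonneg (pow_nonneg ha 1) (pow_nonneg hb 1)) (pow_nonneg hw 1)),
    mul_nonneg key (mul_nonneg (mul_nonneg (pow_nonneg ha 1) (pow_nonneg hb 0)) (pow_nonneg hw 2)),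
    mul_nonneg key (mul_nonneg (mul_nonneg (pow_nonneg ha 2) (pow_nonneg hb 1)) (pow_nonneg hw 0)),
    mul_nonneg key (mul_nonneg (mul_nonneg (pow_nonneg ha 2) (pow_nonneg hb 0)) (pow_nonneg hw 1)),
    mul_nonneg key (mul_nonneg (mul_nonneg (pow_nonneg ha 3) (pow_nonneg hb 0)) (pow_nonneg hw 0))]
lemma keyC (w : ℝ) (hw1 : 1 ≤ w) : w^5 ≤ 0.18393*w^8 + 5*Real.log w + 1 := by
  have hw0 : (0:ℝ) ≤ w := by linarith
  rcases le_total w (21/20:ℝ) with hc0|hc0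
  · have hwa : (1:ℝ) ≤ w := by linarith [hw1]
    have t8 := tan8 (41/40:ℝ) w (by norm_num) hw0
    have c5 := chord5 (1:ℝ) (21/20:ℝ) w (by norm_num) hwa hc0
    have h1k : ((21/20):ℝ)^0 ≤ w := le_trans (by norm_num) hwa
    have hl := step 0 w (21/20:ℝ) h1k hc0
    norm_num at hl t8 c5 ⊢
    linarith [t8, c5, hl]
  rcases le_total w (1103/1000:ℝ) with hc1|hc1
  · have hwa : (21/20:ℝ) ≤ w := by linarith [hc0]
    have t8 := tan8 (2153/2000:ℝ) w (by norm_num) hw0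
    have c5 := chord5 (21/20:ℝ) (1103/1000:ℝ) w (by norm_num) hwa hc1
    have h1k : ((21/20):ℝ)^1 ≤ w := le_trans (by norm_num) hwa
    have hl := step 1 w (1103/1000:ℝ) h1k hc1
    norm_num at hl t8 c5 ⊢
    linarith [t8, c5, hl]
  rcases le_total w (579/500:ℝ) with hc2|hc2
  · have hwa : (1103/1000:ℝ) ≤ w := by linarith [hc1]
    have t8 := tan8 (2261/2000:ℝ) w (by norm_num) hw0
    have c5 := chord5 (1103/1000:ℝ) (579/500:ℝ) w (by norm_num) hwa hc2
    have h1k : ((21/20):ℝ)^2 ≤ w := le_trans (by norm_num) hwa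
    have hl := step 2 w (579/500:ℝ) h1k hc2
    norm_num at hl t8 c5 ⊢
    linarith [t8, c5, hl]
  rcases le_total w (152/125:ℝ) with hc3|hc3
  · have hwa : (579/500:ℝ) ≤ w := by linarith [hc2]
    have t8 := tan8 (1187/1000:ℝ) w (by norm_num) hw0
    have c5 := chord5 (579/500:ℝ) (152/125:ℝ) w (by norm_num) hwa hc3
    have h1k : ((21/20):ℝ)^3 ≤ w := le_trans (by norm_num) hwa
    have hl := step 3 w (152/125:ℝ) h1k hc3
    norm_num at hl t8 c5 ⊢
    linarith [t8, c5, hl]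
  rcases le_total w (1277/1000:ℝ) with hc4|hc4
  · have hwa : (152/125:ℝ) ≤ w := by linarith [hc3]
    have t8 := tan8 (2493/2000:ℝ) w (by norm_num) hw0
    have c5 := chord5 (152/125:ℝ) (1277/1000:ℝ) w (by norm_num) hwa hc4
    have h1k : ((21/20):ℝ)^4 ≤ w := le_trans (by norm_num) hwa
    have hl := step 4 w (1277/1000:ℝ) h1k hc4
    norm_num at hl t8 c5 ⊢
    linarith [t8, c5, hl]
  rcases le_total w (1341/1000:ℝ) with hc5|hc5
  · have hwa : (1277/1000:ℝ) ≤ w := by linarith [hc4]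
    have t8 := tan8 (1309/1000:ℝ) w (by norm_num) hw0
    have c5 := chord5 (1277/1000:ℝ) (1341/1000:ℝ) w (by norm_num) hwa hc5
    have h1k : ((21/20):ℝ)^5 ≤ w := le_trans (by norm_num) hwa
    have hl := step 5 w (1341/1000:ℝ) h1k hc5
    norm_num at hl t8 c5 ⊢
    linarith [t8, c5, hl]
  rcases le_total w (2749/2000:ℝ) with hc6|hc6
  · have hwa : (1341/1000:ℝ) ≤ w := by linarith [hc5]
    have t8 := tan8 (5431/4000:ℝ) w (by norm_num) hw0
    have c5 := chord5 (1341/1000:ℝ) (2749/2000:ℝ) w (by norm_num) hwa hc6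
    have h1k : ((21/20):ℝ)^6 ≤ w := le_trans (by norm_num) hwa
    have hl := step 6 w (2749/2000:ℝ) h1k hc6
    norm_num at hl t8 c5 ⊢
    linarith [t8, c5, hl]
  rcases le_total w (176/125:ℝ) with hc7|hc7
  · have hwa : (2749/2000:ℝ) ≤ w := by linarith [hc6]
    have t8 := tan8 (1113/800:ℝ) w (by norm_num) hw0
    have c5 := chord5 (2749/2000:ℝ) (176/125:ℝ) w (by norm_num) hwa hc7
    have h1k : ((21/20):ℝ)^6 ≤ w := le_trans (by norm_num) hwa
    have hl := step 6 w (176/125:ℝ) h1k hc7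
    norm_num at hl t8 c5 ⊢
    linarith [t8, c5, hl]
  rcases le_total w (1443/1000:ℝ) with hc8|hc8
  · have hwa : (176/125:ℝ) ≤ w := by linarith [hc7]
    have t8 := tan8 (2851/2000:ℝ) w (by norm_num) hw0
    have c5 := chord5 (176/125:ℝ) (1443/1000:ℝ) w (by norm_num) hwa hc8
    have h1k : ((21/20):ℝ)^7 ≤ w := le_trans (by norm_num) hwa
    have hl := step 7 w (1443/1000:ℝ) h1k hc8
    norm_num at hl t8 c5 ⊢
    linarith [t8, c5, hl]
  rcases le_total w (739/500:ℝ) with hc9|hc9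
  · have hwa : (1443/1000:ℝ) ≤ w := by linarith [hc8]
    have t8 := tan8 (2921/2000:ℝ) w (by norm_num) hw0
    have c5 := chord5 (1443/1000:ℝ) (739/500:ℝ) w (by norm_num) hwa hc9
    have h1k : ((21/20):ℝ)^7 ≤ w := le_trans (by norm_num) hwa
    have hl := step 7 w (739/500:ℝ) h1k hc9
    norm_num at hl t8 c5 ⊢
    linarith [t8, c5, hl]
  rcases le_total w (194/125:ℝ) with hc10|hc10
  · have hwa : (739/500:ℝ) ≤ w := by linarith [hc9]
    have t8 := tan8 (303/200:ℝ) w (by norm_num) hw0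
    have c5 := chord5 (739/500:ℝ) (194/125:ℝ) w (by norm_num) hwa hc10
    have h1k : ((21/20):ℝ)^8 ≤ w := le_trans (by norm_num) hwa
    have hl := step 8 w (194/125:ℝ) h1k hc10
    norm_num at hl t8 c5 ⊢
    linarith [t8, c5, hl]
  rcases le_total w (1629/1000:ℝ) with hc11|hc11
  · have hwa : (194/125:ℝ) ≤ w := by linarith [hc10]
    have t8 := tan8 (3181/2000:ℝ) w (by norm_num) hw0
    have c5 := chord5 (194/125:ℝ) (1629/1000:ℝ) w (by norm_num) hwa hc11
    have h1k : ((21/20):ℝ)^9 ≤ w := le_trans (by norm_num) hwa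
    have hl := step 9 w (1629/1000:ℝ) h1k hc11
    norm_num at hl t8 c5 ⊢
    linarith [t8, c5, hl]
  rcases le_total w (1711/1000:ℝ) with hc12|hc12
  · have hwa : (1629/1000:ℝ) ≤ w := by linarith [hc11]
    have t8 := tan8 (167/100:ℝ) w (by norm_num) hw0
    have c5 := chord5 (1629/1000:ℝ) (1711/1000:ℝ) w (by norm_num) hwa hc12
    have h1k : ((21/20):ℝ)^10 ≤ w := le_trans (by norm_num) hwa
    have hl := step 10 w (1711/1000:ℝ) h1k hc12
    norm_num at hl t8 c5 ⊢
    linarith [t8, c5, hl]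
  rcases le_total w (449/250:ℝ) with hc13|hc13
  · have hwa : (1711/1000:ℝ) ≤ w := by linarith [hc12]
    have t8 := tan8 (3507/2000:ℝ) w (by norm_num) hw0
    have c5 := chord5 (1711/1000:ℝ) (449/250:ℝ) w (by norm_num) hwa hc13
    have h1k : ((21/20):ℝ)^11 ≤ w := le_trans (by norm_num) hwa
    have hl := step 11 w (449/250:ℝ) h1k hc13
    norm_num at hl t8 c5 ⊢
    linarith [t8, c5, hl]
  -- tail
  have hwa : (449/250:ℝ) ≤ w := by linarith [hc13]
  have h3 : ((449/250:ℝ))^3 ≤ w^3 := by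
    have h := pow_le_pow_left₀ (show (0:ℝ) ≤ (449/250:ℝ) by norm_num) hwa 3
    simpa using h
  have hw5 : (1:ℝ) ≤ w^5 := by nlinarith [hw1, sq_nonneg (w-1), sq_nonneg (w^2-1), sq_nonneg (w^2-w)]
  have h4 := mul_le_mul_of_nonneg_left h3 (show (0:ℝ) ≤ 0.18393*w^5 by positivity)
  have hlog := Real.log_nonneg hw1
  norm_num at h4
  nlinarith [h4, hw5, hlog]
lemma young (y t : ℝ) (hy : 0 < y) :
    t*y - (Real.exp t - 1 - t) ≤ (1+y)*Real.log (1+y) - y := by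
  have h1 : (0:ℝ) < 1 + y := by linarith
  have h := Real.add_one_le_exp (t - Real.log (1+y))
  rw [Real.exp_sub, Real.exp_log h1] at h
  have h2 : (t - Real.log (1+y) + 1)*(1+y) ≤ Real.exp t := by
    rw [← le_div_iff₀ h1]; linarith
  nlinarith [h2]

lemma keyB (t : ℝ) (ht : 0 ≤ t) : Real.exp t - t - 1 ≤ (1/2) * Real.exp (8*t/5 - 1) := by
  set w := Real.exp (t/5) with hwdef
  have hw1 : 1 ≤ w := Real.one_le_exp (by linarith)
  have h5 : w^5 = Real.exp t := by
    rw [hwdef, ← Real.exp_nat_mul]; congr 1; push_cast; ring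
  have h8 : w^8 = Real.exp (8*t/5) := by
    rw [hwdef, ← Real.exp_nat_mul]; ring_nf
  have hlw : Real.log w = t/5 := Real.log_exp _
  have he : Real.exp (8*t/5 - 1) = w^8 / Real.exp 1 := by
    rw [Real.exp_sub, h8]
  have hC := keyC w hw1
  rw [hlw] at hC
  have hw8 : (0:ℝ) ≤ w^8 := by positivity
  have hhalf : 0.18393 * w^8 ≤ (1/2) * (w^8 / Real.exp 1) := by
    have hh : (0.18393:ℝ) * Real.exp 1 ≤ 1/2 := by nlinarith [Real.exp_one_lt_d9]
    have hq : (0:ℝ) ≤ w^8 / Real.exp 1 := by positivity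
    calc 0.18393*w^8 = (0.18393*Real.exp 1) * (w^8/Real.exp 1) := by
          field_simp
      _ ≤ (1/2) * (w^8/Real.exp 1) := mul_le_mul_of_nonneg_right hh hq
  rw [he, ← h5]
  linarith

/-- For every real `y > 0`, `(1+y)·ln(1+y) − y ≥ (5y/8)·ln(5y/4)`. -/
theorem phi_lower_bound (y : ℝ) (hy : 0 < y) :
    (1 + y) * Real.log (1 + y) - y ≥ (5 * y / 8) * Real.log (5 * y / 4) := by
  rcases le_total y (4/5) with hle | hge
  · have h1 : (0:ℝ) < 1 + y := by linarith
    have hl := Real.one_sub_inv_le_log_of_pos h1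
    have h2 : (1 - (1+y)⁻¹) * (1+y) = y := by field_simp; ring
    have hlhs : y ≤ (1+y)*Real.log (1+y) := by nlinarith [hl]
    have hln : Real.log (5*y/4) ≤ 0 := Real.log_nonpos (by linarith) (by linarith)
    have hrhs : (5*y/8) * Real.log (5*y/4) ≤ 0 :=
      mul_nonpos_iff.2 (Or.inl ⟨by linarith, hln⟩)
    linarith
  · set L := Real.log (5*y/4) with hLdef
    have hL : 0 ≤ L := Real.log_nonneg (by linarith)
    have ht : (0:ℝ) ≤ 5/8*L + 5/8 := by linarith
    have hY := young y (5/8*L + 5/8) hy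
    have hB := keyB (5/8*L + 5/8) ht
    have hexp : Real.exp (8*(5/8*L + 5/8)/5 - 1) = 5*y/4 := by
      rw [show 8*(5/8*L + 5/8)/5 - 1 = L by ring, hLdef, Real.exp_log (by linarith)]
    rw [hexp] at hB
    nlinarith [hY, hB, hy]
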